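/- Uplink-to-downlink power mapping: let G be an N×N real matrix with G_{ij} ≥ 0 for all i,j and G_{ii} > 0 for all i, let γ_i > 0, w_i > 0, n_i > 0, x_i ≥ 0 be reals, and let M > 0. Suppose q ∈ ℝ^N has all entries positive and satisfies, for every i, (1+x_i)G_{ii}q_i/(Mγ_i) = Σ_{j≠i} G_{ji}q_j/M + w_i. Then there exists p ∈ ℝ^N with all entries positive satisfying, for every i, (1+x_i)G_{ii}p_i/(Mγ_i) = Σ_{j≠i} G_{ij}p_j/M + n_i, and moreover Σ_{i=1}^N w_i p_i = Σ_{i=1}^N n_i q_i. -/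

import Mathlib

open Matrix Finset

/-- Uplink-to-downlink power mapping. -/
theorem uplink_to_downlink_power_mapping
    (N : ℕ) (hN : 0 < N) (G : Matrix (Fin N) (Fin N) ℝ)
    (γ w n x q : Fin N → ℝ) (M : ℝ)
    (hG : ∀ i j, 0 ≤ G i j) (hGd : ∀ i, 0 < G i i)
    (hγ : ∀ i, 0 < γ i) (hw : ∀ i, 0 < w i) (hn : ∀ i, 0 < n i)
    (hx : ∀ i, 0 ≤ x i) (hM : 0 < M)
    (hq : ∀ i, 0 < q i)
    (hul : ∀ i, (1 + x i) * G i i * q i / (M * γ i) =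
      (∑ j ∈ Finset.univ.erase i, G j i * q j / M) + w i) :
    ∃ p : Fin N → ℝ, (∀ i, 0 < p i) ∧
      (∀ i, (1 + x i) * G i i * p i / (M * γ i) =
        (∑ j ∈ Finset.univ.erase i, G i j * p j / M) + n i) ∧
      (∑ i, w i * p i = ∑ i, n i * q i) := by
  classical
  have hNe : Nonempty (Fin N) := ⟨⟨0, hN⟩⟩
  set d : Fin N → ℝ := fun i => (1 + x i) * G i i / (M * γ i) with hdDef
  have hd : ∀ i, 0 < d i := fun i => by
    have h1 : (0:ℝ) < 1 + x i := by linarith [hx i]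
    have h2 := hGd i; have h3 := hγ i
    simp only [hdDef]; positivity
  have hdq : ∀ (f : Fin N → ℝ) (i : Fin N),
      (1 + x i) * G i i * f i / (M * γ i) = d i * f i := by
    intro f i; simp only [hdDef]; ring
  clear_value d
  set A : Fin N → Fin N → ℝ := fun i j => if j = i then 0 else G i j / M with hA
  have hA0 : ∀ i j, 0 ≤ A i j := fun i j => by
    simp only [hA]; split
    · exact le_refl _
    · exact div_nonneg (hG i j) hM.le
  have hsum1 : ∀ (f : Fin N → ℝ) (i : Fin N),
      (∑ j ∈ Finset.univ.erase i, G j i * f j / M) = ∑ j, A j i * f j := by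
    intro f i
    rw [← Finset.sum_erase_add Finset.univ _ (Finset.mem_univ i)]
    have hAii : A i i * f i = 0 := by simp [hA]
    rw [hAii, add_zero]
    refine Finset.sum_congr rfl fun j hj => ?_
    have hji : j ≠ i := Finset.ne_of_mem_erase hj
    simp only [hA, if_neg (Ne.symm hji)]
    ring
  have hsum2 : ∀ (f : Fin N → ℝ) (i : Fin N),
      (∑ j ∈ Finset.univ.erase i, G i j * f j / M) = ∑ j, A i j * f j := by
    intro f i
    rw [← Finset.sum_erase_add Finset.univ _ (Finset.mem_univ i)]
    have hAii : A i i * f i = 0 := by simp [hA]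
    rw [hAii, add_zero]
    refine Finset.sum_congr rfl fun j hj => ?_
    have hji : j ≠ i := Finset.ne_of_mem_erase hj
    simp only [hA, if_neg hji]
    ring
  clear_value A
  have hul2 : ∀ i, d i * q i = (∑ j, A j i * q j) + w i := by
    intro i
    rw [← hdq q i, hul i, hsum1 q i]
  set v : Fin N → ℝ := fun i => d i * q i with hvDef
  have hv : ∀ i, 0 < v i := fun i => mul_pos (hd i) (hq i)
  have hvdq : ∀ i, v i = d i * q i := fun i => by rw [hvDef]
  clear_value v
  have hAq : ∀ i, 0 ≤ ∑ j, A j i * q j :=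
    fun i => Finset.sum_nonneg fun j _ => mul_nonneg (hA0 j i) (hq j).le
  have hwv : ∀ i, w i ≤ v i := fun i => by
    have h1 := hul2 i; have h2 := hAq i; rw [hvdq i]; linarith
  set κ : ℝ := (Finset.univ.sup' (Finset.univ_nonempty : (Finset.univ : Finset (Fin N)).Nonempty) (fun i => 1 - w i / v i) : ℝ) with hκDef
  have hle : ∀ i, 1 - w i / v i ≤ κ := by
    intro i; rw [hκDef]; exact Finset.le_sup' (fun i => 1 - w i / v i) (Finset.mem_univ i)
  have hκ0 : 0 ≤ κ := by
    obtain ⟨i⟩ := hNe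
    have h1 : w i / v i ≤ 1 := (div_le_one (hv i)).2 (hwv i)
    have h2 := hle i
    linarith
  have hκ1 : κ < 1 := by
    rw [hκDef, Finset.sup'_lt_iff]
    intro i _
    have : 0 < w i / v i := div_pos (hw i) (hv i)
    linarith
  clear_value κ
  set C : Fin N → Fin N → ℝ := fun i j => q i * A i j / v j with hC
  have hC0 : ∀ i j, 0 ≤ C i j := fun i j => by
    simp only [hC]
    exact div_nonneg (mul_nonneg (hq i).le (hA0 i j)) (hv j).le
  have hCdef : ∀ i j, C i j = q i * A i j / v j := fun i j => by rw [hC]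
  clear_value C
  have hcol : ∀ j, (∑ i, C i j) ≤ κ := by
    intro j
    have hs : (∑ i, C i j) = (∑ i, A i j * q i) / v j := by
      rw [Finset.sum_div]
      exact Finset.sum_congr rfl fun i _ => by rw [hCdef]; ring
    have hAj : (∑ i, A i j * q i) = v j - w j := by
      have := hul2 j; rw [hvdq j]; linarith
    have heq : (∑ i, C i j) = 1 - w j / v j := by
      rw [hs, hAj, sub_div, div_self (hv j).ne']
    rw [heq]
    exact hle j
  set b : Fin N → ℝ := fun i => q i * n i with hbDef
  have hb0 : ∀ i, 0 < b i := fun i => mul_pos (hq i) (hn i)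
  have hbdef : ∀ i, b i = q i * n i := fun i => by rw [hbDef]
  clear_value b
  -- the contraction on ℓ¹
  set T : PiLp 1 (fun _ : Fin N => ℝ) → PiLp 1 (fun _ : Fin N => ℝ) :=
    fun s => WithLp.toLp 1 (fun i => (∑ j, C i j * s j) + b i) with hT
  have hTdef : ∀ (u : PiLp 1 (fun _ : Fin N => ℝ)) (i : Fin N),
      T u i = (∑ j, C i j * u j) + b i := fun u i => rfl
  clear_value T
  have hdd : ∀ (u z : PiLp 1 (fun _ : Fin N => ℝ)), dist u z = ∑ i, |u i - z i| := by
    intro u z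
    rw [PiLp.dist_eq_sum (by norm_num : 0 < (1 : ENNReal).toReal)]
    simp [Real.dist_eq]
  have hlip : ∀ s t : PiLp 1 (fun _ : Fin N => ℝ), dist (T s) (T t) ≤ κ * dist s t := by
    intro s t
    rw [hdd, hdd]
    have hTst : ∀ i, T s i - T t i = ∑ j, C i j * (s j - t j) := by
      intro i
      rw [hTdef, hTdef, add_sub_add_right_eq_sub, ← Finset.sum_sub_distrib]
      exact Finset.sum_congr rfl fun j _ => by ring
    calc (∑ i, |T s i - T t i|) = ∑ i, |∑ j, C i j * (s j - t j)| := by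
          exact Finset.sum_congr rfl fun i _ => by rw [hTst i]
      _ ≤ ∑ i, ∑ j, C i j * |s j - t j| := by
          refine Finset.sum_le_sum fun i _ => ?_
          refine (Finset.abs_sum_le_sum_abs _ _).trans ?_
          refine Finset.sum_le_sum fun j _ => ?_
          rw [abs_mul, abs_of_nonneg (hC0 i j)]
      _ = ∑ j, (∑ i, C i j) * |s j - t j| := by
          rw [Finset.sum_comm]
          exact Finset.sum_congr rfl fun j _ => by rw [Finset.sum_mul]
      _ ≤ ∑ j, κ * |s j - t j| := by
          exact Finset.sum_le_sum fun j _ => mul_le_mul_of_nonneg_right (hcol j) (abs_nonneg _)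
      _ = κ * ∑ j, |s j - t j| := by rw [Finset.mul_sum]
  have hcw : ContractingWith ⟨κ, hκ0⟩ T := by
    constructor
    · exact_mod_cast hκ1
    · exact LipschitzWith.of_dist_le_mul fun s t => hlip s t
  set s : PiLp 1 (fun _ : Fin N => ℝ) := ContractingWith.fixedPoint T hcw with hs
  have hfix : T s = s := hcw.fixedPoint_isFixedPt
  clear_value s
  -- positivity of the fixed point
  have hTmono : ∀ u : PiLp 1 (fun _ : Fin N => ℝ), (∀ i, b i ≤ u i) → ∀ i, b i ≤ T u i := by
    intro u hu i
    have hnn : (0:ℝ) ≤ ∑ j, C i j * u j :=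
      Finset.sum_nonneg fun j _ => mul_nonneg (hC0 i j) ((hb0 j).le.trans (hu j))
    rw [hTdef]; linarith
  have hiter : ∀ k, ∀ i, b i ≤ (T^[k] (WithLp.toLp 1 b : PiLp 1 (fun _ : Fin N => ℝ))) i := by
    intro k
    induction k with
    | zero => intro i; simp
    | succ k ih =>
      intro i
      rw [Function.iterate_succ_apply']
      exact hTmono _ ih i
  have hsb : ∀ i, b i ≤ s i := by
    intro i
    have hlim : Filter.Tendsto (fun k => T^[k] (WithLp.toLp 1 b : PiLp 1 (fun _ : Fin N => ℝ)))
        Filter.atTop (nhds s) := by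
      rw [hs]; exact hcw.tendsto_iterate_fixedPoint _
    have hci : Continuous (fun u : PiLp 1 (fun _ : Fin N => ℝ) => u i) :=
      (continuous_apply i).comp (PiLp.continuous_ofLp 1 _)
    have hl2 : Filter.Tendsto (fun k => (T^[k] (WithLp.toLp 1 b : PiLp 1 (fun _ : Fin N => ℝ))) i)
        Filter.atTop (nhds (s i)) := (hci.tendsto s).comp hlim
    exact ge_of_tendsto hl2 (Filter.Eventually.of_forall fun k => hiter k i)
  have hspos : ∀ i, 0 < s i := fun i => (hb0 i).trans_le (hsb i)
  -- the downlink equation in matrix form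
  have hdl : ∀ i, d i * (s i / v i) = (∑ j, A i j * (s j / v j)) + n i := by
    intro i
    apply mul_left_cancel₀ (hq i).ne'
    have key : (∑ j, C i j * s j) + b i = s i := by
      have := congrFun (congrArg WithLp.ofLp hfix) i
      rw [hTdef] at this
      exact this
    have hL : q i * (d i * (s i / v i)) = s i := by
      rw [hvdq i]
      have h1 : d i ≠ 0 := (hd i).ne'
      have h2 : q i ≠ 0 := (hq i).ne'
      field_simp
    have hR : q i * ((∑ j, A i j * (s j / v j)) + n i) = (∑ j, C i j * s j) + b i := by
      rw [mul_add, Finset.mul_sum, hbdef]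
      congr 1
      refine Finset.sum_congr rfl fun j _ => ?_
      rw [hCdef]
      have h3 : v j ≠ 0 := (hv j).ne'
      field_simp
    rw [hL, hR, key]
  refine ⟨fun i => s i / v i, fun i => div_pos (hspos i) (hv i), ?_, ?_⟩
  · intro i
    rw [hdq (fun i => s i / v i) i, hsum2 (fun i => s i / v i) i]
    exact hdl i
  · -- the sum identity
    have h1 : ∀ j, (∑ i, A j i * (s i / v i)) = d j * (s j / v j) - n j := by
      intro j; have := hdl j; linarith
    have hwform : ∀ i, w i = d i * q i - ∑ j, A j i * q j := by
      intro i; have := hul2 i; linarith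
    calc ∑ i, w i * (s i / v i)
        = ∑ i, ((d i * q i) * (s i / v i)) - ∑ i, ∑ j, (A j i * q j) * (s i / v i) := by
          rw [← Finset.sum_sub_distrib]
          refine Finset.sum_congr rfl fun i _ => ?_
          rw [hwform i, sub_mul, Finset.sum_mul]
      _ = ∑ i, ((d i * q i) * (s i / v i)) - ∑ j, q j * ∑ i, A j i * (s i / v i) := by
          rw [Finset.sum_comm]
          congr 1
          refine Finset.sum_congr rfl fun j _ => ?_
          rw [Finset.mul_sum]
          exact Finset.sum_congr rfl fun i _ => by ring
      _ = ∑ i, ((d i * q i) * (s i / v i)) - ∑ j, q j * (d j * (s j / v j) - n j) := by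
          congr 1
          exact Finset.sum_congr rfl fun j _ => by rw [h1 j]
      _ = ∑ i, n i * q i := by
          have hsplit : ∑ j, q j * (d j * (s j / v j) - n j)
              = ∑ j, ((d j * q j) * (s j / v j)) - ∑ j, n j * q j := by
            rw [← Finset.sum_sub_distrib]
            exact Finset.sum_congr rfl fun j _ => by ring
          rw [hsplit]
          ring
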